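/- Let g : ℝ → ℝ be continuous, let I ⊆ ℝ be a compact nonempty interval, and let ε > 0. Then there exists a finite collection of pairwise disjoint closed intervals whose union contains the set I ∩ {x : g(x) ≥ ε} and is contained in the set I ∩ {x : g(x) ≥ 0}. -/

import Mathlib

open Set

theorem cover_superlevel_by_intervals (g : ℝ → ℝ) (hg : Continuous g)
    (a b : ℝ) (hab : a ≤ b) (ε : ℝ) (hε : 0 < ε) :
    ∃ (n : ℕ) (c d : Fin n → ℝ),
      (∀ i, c i ≤ d i) ∧
      (∀ i j, i ≠ j → Disjoint (Set.Icc (c i) (d i)) (Set.Icc (c j) (d j))) ∧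
      (Set.Icc a b ∩ {x | ε ≤ g x} ⊆ ⋃ i, Set.Icc (c i) (d i)) ∧
      (⋃ i, Set.Icc (c i) (d i)) ⊆ Set.Icc a b ∩ {x | 0 ≤ g x} := by
  classical
  rcases eq_or_lt_of_le hab with rfl | hlt
  · -- degenerate case a = b
    by_cases hga : 0 ≤ g a
    · refine ⟨1, fun _ => a, fun _ => a, fun _ => le_refl a, ?_, ?_, ?_⟩
      · intro i j hij; exact absurd (Subsingleton.elim i j) hij
      · intro x hx
        exact Set.mem_iUnion.mpr ⟨0, hx.1⟩
      · intro x hx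
        rcases Set.mem_iUnion.mp hx with ⟨i, hi⟩
        have : x = a := le_antisymm hi.2 hi.1
        subst this
        exact ⟨Set.mem_Icc.mpr ⟨le_refl _, le_refl _⟩, hga⟩
    · refine ⟨0, Fin.elim0, Fin.elim0, fun i => i.elim0, fun i => i.elim0, ?_, ?_⟩
      · intro x hx
        have hxa : x = a := le_antisymm hx.1.2 hx.1.1
        exact absurd (hxa ▸ hx.2) (by simp only [Set.mem_setOf_eq]; linarith)
      · intro x hx
        rcases Set.mem_iUnion.mp hx with ⟨i, _⟩
        exact i.elim0
  · -- main case a < b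
    -- uniform continuity
    obtain ⟨δ, hδpos, hδ⟩ := (Metric.uniformContinuousOn_iff_le.mp
      ((isCompact_Icc (a := a) (b := b)).uniformContinuousOn_of_continuous
        hg.continuousOn)) (ε/2) (by linarith)
    -- choose N
    obtain ⟨N0, hN0⟩ := exists_nat_gt ((b - a) / δ)
    set N := N0 + 1 with hN
    have hNpos : 0 < N := Nat.succ_pos _
    have hNR : (b - a) / δ < N := lt_of_lt_of_le hN0 (by exact_mod_cast Nat.le_succ _)
    set h : ℝ := (b - a) / N with hh
    have hhpos : 0 < h := div_pos (by linarith) (by positivity)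
    have hhδ : h ≤ δ := by
      rw [hh, div_le_iff₀ (by positivity)]
      rw [div_lt_iff₀ hδpos] at hNR
      linarith
    set t : ℕ → ℝ := fun k => a + k * h with ht
    have ht0 : t 0 = a := by simp [ht]
    have htN : t N = b := by
      have : (N : ℝ) ≠ 0 := by positivity
      simp only [ht, hh]
      rw [mul_div_assoc', mul_div_right_comm, div_self this]
      ring
    have tmono : ∀ {p q : ℕ}, p ≤ q → t p ≤ t q := by
      intro p q hpq
      have : (p : ℝ) ≤ q := by exact_mod_cast hpq
      simp only [ht]
      nlinarith
    have tsmono : ∀ {p q : ℕ}, p < q → t p < t q := by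
      intro p q hpq
      have : (p : ℝ) < q := by exact_mod_cast hpq
      simp only [ht]
      nlinarith
    have hgap : ∀ k : ℕ, t (k + 1) - t k = h := by
      intro k; simp [ht]; ring
    -- the selected cells
    set S : ℕ → Prop := fun k => k < N ∧ ∃ x ∈ Icc (t k) (t (k + 1)), ε ≤ g x with hS
    -- g ≥ 0 on selected cells
    have pos : ∀ k, S k → ∀ y ∈ Icc (t k) (t (k + 1)), 0 ≤ g y := by
      intro k hk y hy
      obtain ⟨hkN, x, hx, hgx⟩ := hk
      have hsub : Icc (t k) (t (k + 1)) ⊆ Icc a b := by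
        rw [← ht0, ← htN]
        exact Set.Icc_subset_Icc (tmono (Nat.zero_le _)) (tmono hkN)
      have hdist : dist x y ≤ δ := by
        rw [Real.dist_eq]
        have := hgap k
        have h1 := hx.1; have h2 := hx.2; have h3 := hy.1; have h4 := hy.2
        rw [abs_le]; constructor <;> linarith
      have := hδ x (hsub hx) y (hsub hy) hdist
      rw [Real.dist_eq, abs_le] at this
      linarith [this.1]
    -- run lengths
    have hLex : ∀ k : ℕ, ∃ m, ¬ S (k + m + 1) := by
      intro k
      exact ⟨N, fun hc => absurd hc.1 (by omega)⟩
    set L : ℕ → ℕ := fun k => Nat.find (hLex k) with hLdef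
    have runS : ∀ k m, S k → m ≤ L k → S (k + m) := by
      intro k m hk hm
      cases m with
      | zero => exact hk
      | succ j =>
        have hj : j < L k := by omega
        exact not_not.mp (Nat.find_min (hLex k) hj)
    have endS : ∀ k, ¬ S (k + L k + 1) := fun k => Nat.find_spec (hLex k)
    -- run starts
    set R : ℕ → Prop := fun k => S k ∧ (k = 0 ∨ ¬ S (k - 1)) with hR
    -- every selected cell belongs to a run
    have key : ∀ k, S k → ∃ k0, R k0 ∧ k0 ≤ k ∧ k ≤ k0 + L k0 := by
      intro k
      induction k with
      | zero => intro hk; exact ⟨0, ⟨hk, Or.inl rfl⟩, le_refl _, Nat.le_add_right _ _⟩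
      | succ j ih =>
        intro hk
        by_cases hRk : R (j + 1)
        · exact ⟨j + 1, hRk, le_refl _, Nat.le_add_right _ _⟩
        · have hSj : S j := by
            by_contra hc
            exact hRk ⟨hk, Or.inr (by simpa using hc)⟩
          obtain ⟨k0, hk0R, hk0le, hjle⟩ := ih hSj
          refine ⟨k0, hk0R, le_trans hk0le (Nat.le_succ _), ?_⟩
          rcases lt_or_eq_of_le hjle with hlt' | heq
          · omega
          · exfalso
            rw [heq] at hk
            exact endS k0 hk
    -- location lemma
    have loc : ∀ q p, p < q → ∀ x, x ∈ Icc (t p) (t q) →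
        ∃ m, p ≤ m ∧ m < q ∧ x ∈ Icc (t m) (t (m + 1)) := by
      intro q
      induction q with
      | zero => intro p hp; omega
      | succ j ih =>
        intro p hp x hx
        rcases Nat.lt_succ_iff_lt_or_eq.mp hp with hpj | rfl
        · by_cases hxj : x ≤ t j
          · obtain ⟨m, h1, h2, h3⟩ := ih p hpj x ⟨hx.1, hxj⟩
            exact ⟨m, h1, by omega, h3⟩
          · exact ⟨j, le_of_lt hpj, Nat.lt_succ_self _, ⟨le_of_lt (not_le.mp hxj), hx.2⟩⟩
        · exact ⟨p, le_refl _, Nat.lt_succ_self _, hx⟩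
    -- run endpoints stay within range
    have runlt : ∀ k, S k → k + L k < N := by
      intro k hk
      exact (runS k (L k) hk (le_refl _)).1
    -- the finite set of run starts
    set F : Finset ℕ := (Finset.range N).filter R with hF
    set n := F.card with hn
    set e := F.equivFin with he
    refine ⟨n, fun i => t ((e.symm i : ℕ)), fun i => t ((e.symm i : ℕ) + L (e.symm i : ℕ) + 1),
      ?_, ?_, ?_, ?_⟩
    · intro i
      exact tmono (by omega)
    · -- disjointness
      have main : ∀ k k', R k → R k' → k < k' → k + L k + 1 < k' := by
        intro k k' hk hk' hlt'
        by_contra hcon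
        push_neg at hcon
        have hk'0 : k' ≠ 0 := by omega
        have hnS : ¬ S (k' - 1) := by
          rcases hk'.2 with h0 | h1
          · exact absurd h0 hk'0
          · exact h1
        have : S (k' - 1) := by
          have : k' - 1 = k + (k' - 1 - k) := by omega
          rw [this]
          exact runS k _ hk.1 (by omega)
        exact hnS this
      intro i j hij
      have hkne : ((e.symm i : ℕ)) ≠ ((e.symm j : ℕ)) := by
        intro hc
        exact hij (by
          have : e.symm i = e.symm j := Subtype.ext hc
          exact e.symm.injective this ▸ rfl)
      have hRi : R (e.symm i : ℕ) := (Finset.mem_filter.mp (e.symm i).2).2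
      have hRj : R (e.symm j : ℕ) := (Finset.mem_filter.mp (e.symm j).2).2
      rcases lt_or_gt_of_ne hkne with hlt' | hlt'
      · have := main _ _ hRi hRj hlt'
        rw [Set.disjoint_left]
        intro x hx hx'
        have h1 : x ≤ t ((e.symm i : ℕ) + L (e.symm i : ℕ) + 1) := hx.2
        have h2 : t (e.symm j : ℕ) ≤ x := hx'.1
        have := tsmono this
        linarith
      · have := main _ _ hRj hRi hlt'
        rw [Set.disjoint_left]
        intro x hx hx'
        have h1 : x ≤ t ((e.symm j : ℕ) + L (e.symm j : ℕ) + 1) := hx'.2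
        have h2 : t (e.symm i : ℕ) ≤ x := hx.1
        have := tsmono this
        linarith
    · -- covering
      intro x hx
      have hx' : x ∈ Icc (t 0) (t N) := by rw [ht0, htN]; exact hx.1
      obtain ⟨m, _, hmN, hxm⟩ := loc N 0 hNpos x hx'
      have hSm : S m := ⟨hmN, x, hxm, hx.2⟩
      obtain ⟨k0, hk0R, hk0le, hmle⟩ := key m hSm
      have hk0F : k0 ∈ F := Finset.mem_filter.mpr ⟨Finset.mem_range.mpr (by omega), hk0R⟩
      refine Set.mem_iUnion.mpr ⟨e ⟨k0, hk0F⟩, ?_⟩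
      have hback : ((e.symm (e ⟨k0, hk0F⟩) : ℕ)) = k0 := by
        rw [Equiv.symm_apply_apply]
      simp only [hback]
      exact ⟨le_trans (tmono hk0le) hxm.1, le_trans hxm.2 (tmono (by omega))⟩
    · -- union inside
      intro x hx
      rcases Set.mem_iUnion.mp hx with ⟨i, hi⟩
      set k := (e.symm i : ℕ) with hk
      have hRk : R k := (Finset.mem_filter.mp (e.symm i).2).2
      have hSk : S k := hRk.1
      have hkN : k + L k < N := runlt k hSk
      constructor
      · have h1 : t 0 ≤ t k := tmono (Nat.zero_le k)
        have h2 : t (k + L k + 1) ≤ t N := tmono (by omega)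
        rw [ht0] at h1; rw [htN] at h2
        exact ⟨le_trans h1 hi.1, le_trans hi.2 h2⟩
      · obtain ⟨m, hm1, hm2, hm3⟩ := loc (k + L k + 1) k (by omega) x hi
        have hSm : S m := by
          have : m = k + (m - k) := by omega
          rw [this]
          exact runS k _ hSk (by omega)
        exact pos m hSm x hm3
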